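/- Let G be a permutation group on [n] with n ≥ 5. If for every transformation f : [n] → [n] of rank n−1 and every pair of disjoint 2-element subsets {a,b}, {c,d} of [n] there exists a transformation in the monoid generated by G ∪ {f} mapping exactly one of the two sets to a singleton, then G is primitive. -/

import Mathlib

open Finset

/-- The set of functions on `Fin n` arising from elements of the permutation group `G`. -/
def permSet {n : ℕ} (G : Subgroup (Equiv.Perm (Fin n))) : Set (Function.End (Fin n)) :=
  {h | ∃ g ∈ G, h = ⇑g}

/-- The transformation monoid generated by `G ∪ {f}`. -/
def genMon {n : ℕ} (G : Subgroup (Equiv.Perm (Fin n))) (f : Fin n → Fin n) :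
    Submonoid (Function.End (Fin n)) :=
  Submonoid.closure (permSet G ∪ {f})

/-- A permutation group is primitive if no subset `Δ` with `1 < |Δ| < n` is a block. -/
def IsPrimitive' {n : ℕ} (G : Subgroup (Equiv.Perm (Fin n))) : Prop :=
  ¬ ∃ Δ : Finset (Fin n), 1 < Δ.card ∧ Δ.card < n ∧
      ∀ g ∈ G, Δ.image ⇑g = Δ ∨ Disjoint (Δ.image ⇑g) Δ

/-- If a symmetric-style separation relation `P` is preserved by every generator,
then it is preserved by every element of the generated monoid, and two `P`-separated
disjoint pairs contradict the distinguishing hypothesis. -/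
lemma aux_contra {n : ℕ} (G : Subgroup (Equiv.Perm (Fin n)))
    (H : ∀ f : Fin n → Fin n, (univ.image f).card = n - 1 →
      ∀ A B : Finset (Fin n), A.card = 2 → B.card = 2 → Disjoint A B →
        ∃ h ∈ genMon G f, Xor' ((A.image h).card = 1) ((B.image h).card = 1))
    (f : Fin n → Fin n) (hrank : (univ.image f).card = n - 1)
    (P : Fin n → Fin n → Prop)
    (hPne : ∀ x y, P x y → x ≠ y)
    (hgP : ∀ g ∈ G, ∀ x y, P x y → P (g x) (g y))
    (hfP : ∀ x y, P x y → P (f x) (f y))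
    (x1 y1 x2 y2 : Fin n)
    (hp1 : P x1 y1) (hp2 : P x2 y2)
    (d11 : x1 ≠ x2) (d12 : x1 ≠ y2) (d21 : y1 ≠ x2) (d22 : y1 ≠ y2) : False := by
  have key : ∀ h ∈ genMon G f, ∀ x y, P x y → P (h x) (h y) := by
    intro h hh
    induction hh using Submonoid.closure_induction with
    | mem w hw =>
      rcases hw with hw | hw
      · obtain ⟨g, hg, rfl⟩ := hw
        exact hgP g hg
      · change w = f at hw
        subst hw
        exact hfP
    | one => intro x y h; exact h
    | mul a b _ _ ha hb => intro x y h; exact ha _ _ (hb _ _ h)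
  have e1 : x1 ≠ y1 := hPne _ _ hp1
  have e2 : x2 ≠ y2 := hPne _ _ hp2
  have cA : ({x1, y1} : Finset (Fin n)).card = 2 := by
    rw [Finset.card_insert_of_notMem (by simp [e1]), Finset.card_singleton]
  have cB : ({x2, y2} : Finset (Fin n)).card = 2 := by
    rw [Finset.card_insert_of_notMem (by simp [e2]), Finset.card_singleton]
  have hdisj : Disjoint ({x1, y1} : Finset (Fin n)) {x2, y2} := by
    simp [Finset.disjoint_left, d11, d12, d21, d22]
  obtain ⟨h, hh, hxor⟩ := H f hrank {x1, y1} {x2, y2} cA cB hdisj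
  have k1 : h x1 ≠ h y1 := hPne _ _ (key h hh _ _ hp1)
  have k2 : h x2 ≠ h y2 := hPne _ _ (key h hh _ _ hp2)
  have i1 : (({x1, y1} : Finset (Fin n)).image h).card = 2 := by
    change (({x1, y1} : Finset (Fin n)).image (fun x => h x)).card = 2
    rw [Finset.image_insert, Finset.image_singleton,
      Finset.card_insert_of_notMem (by simp [k1]), Finset.card_singleton]
  have i2 : (({x2, y2} : Finset (Fin n)).image h).card = 2 := by
    change (({x2, y2} : Finset (Fin n)).image (fun x => h x)).card = 2
    rw [Finset.image_insert, Finset.image_singleton,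
      Finset.card_insert_of_notMem (by simp [k2]), Finset.card_singleton]
  rw [i1, i2] at hxor
  rcases hxor with ⟨h1, _⟩ | ⟨h1, _⟩ <;> omega

theorem disjoint_2_set_distinguishable_implies_primitive {n : ℕ} (hn : 5 ≤ n)
    (G : Subgroup (Equiv.Perm (Fin n)))
    (H : ∀ f : Fin n → Fin n, (univ.image f).card = n - 1 →
      ∀ A B : Finset (Fin n), A.card = 2 → B.card = 2 → Disjoint A B →
        ∃ h ∈ genMon G f, Xor' ((A.image h).card = 1) ((B.image h).card = 1)) :
    IsPrimitive' G := by
  rintro ⟨Δ, hΔ1, hΔn, hblock⟩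
  have hcardim : ∀ g : Equiv.Perm (Fin n), (Δ.image ⇑g).card = Δ.card := fun g =>
    Finset.card_image_of_injective _ g.injective
  have hid : Δ.image ⇑(1 : Equiv.Perm (Fin n)) = Δ := by simp
  -- block dichotomy
  have hdich : ∀ g ∈ G, ∀ z, z ∈ Δ → z ∈ Δ.image ⇑g → Δ.image ⇑g = Δ := by
    intro g hg z hz hz'
    rcases hblock g hg with h | h
    · exact h
    · exact absurd hz (Finset.disjoint_left.mp h hz')
  by_cases hsmall : Δ.card + 2 ≤ n
  · -- there are at least two points outside Δ
    obtain ⟨a, ha, b, hb, hab⟩ := Finset.one_lt_card.mp hΔ1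
    set f : Fin n → Fin n := fun x => if x = a then b else x with hf
    have himf : univ.image f = univ.erase a := by
      ext z
      simp only [Finset.mem_image, Finset.mem_erase, Finset.mem_univ, and_true]
      constructor
      · rintro ⟨x, -, rfl⟩
        by_cases hx : x = a <;> simp [hf, hx, Ne.symm hab]
      · intro hz
        exact ⟨z, trivial, by simp [hf, hz]⟩
    have hrank : (univ.image f).card = n - 1 := by
      rw [himf, Finset.card_erase_of_mem (Finset.mem_univ a), Finset.card_univ,
        Fintype.card_fin]
    set P : Fin n → Fin n → Prop := fun x y =>
      x ≠ y ∧ ∀ g ∈ G, ¬(x ∈ Δ.image ⇑g ∧ y ∈ Δ.image ⇑g) with hP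
    have hPsymm : ∀ x y, P x y → P y x := by
      rintro x y ⟨hxy, hsep⟩
      exact ⟨hxy.symm, fun g hg hc => hsep g hg ⟨hc.2, hc.1⟩⟩
    have hPne : ∀ x y, P x y → x ≠ y := fun x y h => h.1
    have hgP : ∀ g ∈ G, ∀ x y, P x y → P (g x) (g y) := by
      rintro g hg x y ⟨hxy, hsep⟩
      refine ⟨fun h => hxy (g.injective h), ?_⟩
      rintro g' hg' ⟨hx, hy⟩
      have hmem : ∀ z : Fin n, g z ∈ Δ.image ⇑g' → z ∈ Δ.image ⇑(g⁻¹ * g') := by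
        intro z hz
        obtain ⟨d, hd, hdz⟩ := Finset.mem_image.mp hz
        exact Finset.mem_image.mpr ⟨d, hd, by
          simp [Equiv.Perm.mul_apply, hdz]⟩
      exact hsep (g⁻¹ * g') (G.mul_mem (G.inv_mem hg) hg') ⟨hmem x hx, hmem y hy⟩
    -- helper for the f-preservation in the asymmetric case
    have hfP1 : ∀ x y, P x y → x = a → P (f x) (f y) := by
      rintro x y ⟨hxy, hsep⟩ rfl
      have hyx : y ≠ x := hxy.symm
      have hfx : f x = b := by simp [hf]
      have hfy : f y = y := by simp [hf, hyx]
      rw [hfx, hfy]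
      have hyΔ : y ∉ Δ := by
        intro hyΔ
        exact hsep 1 G.one_mem ⟨by rw [hid]; exact ha, by rw [hid]; exact hyΔ⟩
      constructor
      · rintro rfl; exact hyΔ hb
      · rintro g hg ⟨hbg, hyg⟩
        have := hdich g hg b hb hbg
        rw [this] at hyg
        exact hyΔ hyg
    have hfP : ∀ x y, P x y → P (f x) (f y) := by
      intro x y hp
      by_cases hx : x = a
      · exact hfP1 x y hp hx
      · by_cases hy : y = a
        · exact hPsymm _ _ (hfP1 y x (hPsymm _ _ hp) hy)
        · have hfx : f x = x := by simp [hf, hx]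
          have hfy : f y = y := by simp [hf, hy]
          rw [hfx, hfy]; exact hp
    -- pick the four points
    have houtcard : 1 < (univ \ Δ).card := by
      rw [Finset.card_sdiff_of_subset (Finset.subset_univ Δ), Finset.card_univ, Fintype.card_fin]
      omega
    obtain ⟨u, hu, v, hv, huv⟩ := Finset.one_lt_card.mp houtcard
    have huΔ : u ∉ Δ := (Finset.mem_sdiff.mp hu).2
    have hvΔ : v ∉ Δ := (Finset.mem_sdiff.mp hv).2
    have hsepout : ∀ x y : Fin n, x ∈ Δ → y ∉ Δ → P x y := by
      intro x y hx hy
      refine ⟨fun h => hy (h ▸ hx), ?_⟩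
      rintro g hg ⟨hxg, hyg⟩
      have := hdich g hg x hx hxg
      rw [this] at hyg
      exact hy hyg
    exact aux_contra G H f hrank P hPne hgP hfP a u b v
      (hsepout a u ha huΔ) (hsepout b v hb hvΔ)
      (fun h => hab h) (fun h => hvΔ (h ▸ ha)) (fun h => (huΔ (h ▸ hb)).elim) huv
  · -- Δ.card = n - 1
    have hcard : Δ.card + 1 = n := by omega
    have hfix : ∀ g ∈ G, Δ.image ⇑g = Δ := by
      intro g hg
      rcases hblock g hg with h | h
      · exact h
      · exfalso
        have h1 : (Δ.image ⇑g ∪ Δ).card = Δ.card + Δ.card := by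
          rw [Finset.card_union_of_disjoint h, hcardim]
        have h2 : (Δ.image ⇑g ∪ Δ).card ≤ n := by
          have := Finset.card_le_univ (Δ.image ⇑g ∪ Δ)
          rwa [Fintype.card_fin] at this
        omega
    obtain ⟨c, hc⟩ := Finset.card_pos.mp (by omega : 0 < Δ.card)
    set f : Fin n → Fin n := fun x => if x ∈ Δ then x else c with hf
    have himf : univ.image f = Δ := by
      ext z
      simp only [Finset.mem_image, Finset.mem_univ, true_and]
      constructor
      · rintro ⟨x, rfl⟩
        by_cases hx : x ∈ Δ <;> simp [hf, hx, hc]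
      · intro hz
        exact ⟨z, by simp [hf, hz]⟩
    have hrank : (univ.image f).card = n - 1 := by rw [himf]; omega
    set P : Fin n → Fin n → Prop := fun x y => x ≠ y ∧ x ∈ Δ ∧ y ∈ Δ with hP
    have hPne : ∀ x y, P x y → x ≠ y := fun x y h => h.1
    have hgP : ∀ g ∈ G, ∀ x y, P x y → P (g x) (g y) := by
      rintro g hg x y ⟨hxy, hx, hy⟩
      refine ⟨fun h => hxy (g.injective h), ?_, ?_⟩
      · rw [← hfix g hg]; exact Finset.mem_image_of_mem _ hx
      · rw [← hfix g hg]; exact Finset.mem_image_of_mem _ hy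
    have hfP : ∀ x y, P x y → P (f x) (f y) := by
      rintro x y ⟨hxy, hx, hy⟩
      have hfx : f x = x := by simp [hf, hx]
      have hfy : f y = y := by simp [hf, hy]
      rw [hfx, hfy]; exact ⟨hxy, hx, hy⟩
    -- four distinct points in Δ
    obtain ⟨x1, hx1⟩ := Finset.card_pos.mp (by omega : 0 < Δ.card)
    have hc2 : 0 < (Δ.erase x1).card := by
      rw [Finset.card_erase_of_mem hx1]; omega
    obtain ⟨x2, hx2⟩ := Finset.card_pos.mp hc2
    have hc3 : 0 < ((Δ.erase x1).erase x2).card := by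
      rw [Finset.card_erase_of_mem hx2, Finset.card_erase_of_mem hx1]; omega
    obtain ⟨x3, hx3⟩ := Finset.card_pos.mp hc3
    have hc4 : 0 < (((Δ.erase x1).erase x2).erase x3).card := by
      rw [Finset.card_erase_of_mem hx3, Finset.card_erase_of_mem hx2,
        Finset.card_erase_of_mem hx1]; omega
    obtain ⟨x4, hx4⟩ := Finset.card_pos.mp hc4
    obtain ⟨h43, h42, h41, hx4Δ⟩ :
        x4 ≠ x3 ∧ x4 ≠ x2 ∧ x4 ≠ x1 ∧ x4 ∈ Δ := by
      simp only [Finset.mem_erase] at hx4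
      exact ⟨hx4.1, hx4.2.1, hx4.2.2.1, hx4.2.2.2⟩
    obtain ⟨h32, h31, hx3Δ⟩ : x3 ≠ x2 ∧ x3 ≠ x1 ∧ x3 ∈ Δ := by
      simp only [Finset.mem_erase] at hx3
      exact ⟨hx3.1, hx3.2.1, hx3.2.2⟩
    obtain ⟨h21, hx2Δ⟩ : x2 ≠ x1 ∧ x2 ∈ Δ := by
      simp only [Finset.mem_erase] at hx2
      exact ⟨hx2.1, hx2.2⟩
    exact aux_contra G H f hrank P hPne hgP hfP x1 x2 x3 x4
      ⟨h21.symm, hx1, hx2Δ⟩ ⟨h43.symm, hx3Δ, hx4Δ⟩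
      h31.symm h41.symm h32.symm h42.symm
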